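/- arXiv:2210.04075 — 2 statements merged into one kernel-verified Lean document; each statement's English description precedes it below -/
import Mathlib

section
/- Let A be a commutative Banach algebra, φ a character of A, and d a nonzero continuous point derivation at φ. Then the derivation D(a) = d(a)·φ from A to A* is not cyclic; in particular, A is not cyclically weakly amenable and hence not weakly amenable. -/
/-- a commutative Banach algebra with a nonzero continuous point
derivation at a character admits the non-cyclic derivation `a ↦ d(a)·φ`; in
particular it is not cyclically weakly amenable, hence not weakly amenable. -/
theorem point_derivation_not_cyclic {A : Type*} [NormedCommRing A]
    [NormedAlgebra ℂ A] [CompleteSpace A]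
    (φ : A →L[ℂ] ℂ) (hφ_ne : φ ≠ 0) (hφ_mul : ∀ a b, φ (a * b) = φ a * φ b)
    (d : A →L[ℂ] ℂ) (hd_ne : d ≠ 0)
    (hd : ∀ a b, d (a * b) = d a * φ b + φ a * d b) :
    (∃ a : A, d a * φ a ≠ 0) ∧
    ¬ (∀ D : A →L[ℂ] (A →L[ℂ] ℂ),
        (∀ a b c : A, D (a * b) c = D a (b * c) + D b (c * a)) →
        ∀ a : A, D a a = 0) ∧
    ¬ (∀ D : A →L[ℂ] (A →L[ℂ] ℂ),
        (∀ a b c : A, D (a * b) c = D a (b * c) + D b (c * a)) →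
        ∃ z : A →L[ℂ] ℂ, ∀ a b : A, D a b = z (a * b) - z (b * a)) := by
  obtain ⟨b, hb⟩ : ∃ b, d b ≠ 0 := by
    by_contra h
    push_neg at h
    exact hd_ne (ContinuousLinearMap.ext fun x => by simpa using h x)
  obtain ⟨u, hu⟩ : ∃ u, φ u ≠ 0 := by
    by_contra h
    push_neg at h
    exact hφ_ne (ContinuousLinearMap.ext fun x => by simpa using h x)
  obtain ⟨a, ha⟩ : ∃ a : A, d a * φ a ≠ 0 := by
    by_contra h
    push_neg at h
    have h1 := h (b + u)
    have h2 := h (b - u)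
    have hφb : φ b = 0 := by
      by_contra hφb
      exact (mul_ne_zero hb hφb) (h b)
    simp only [map_add, map_sub, hφb, zero_add, zero_sub, mul_neg, neg_eq_zero] at h1 h2
    have e1 : d b + d u = 0 := by
      rcases mul_eq_zero.mp h1 with h' | h'
      · exact h'
      · exact absurd h' hu
    have e2 : d b - d u = 0 := by
      rcases mul_eq_zero.mp h2 with h' | h'
      · exact h'
      · exact absurd h' hu
    have : d b = 0 := by linear_combination (e1 + e2) / 2
    exact hb this
  set D : A →L[ℂ] (A →L[ℂ] ℂ) := d.smulRight φ with hD
  have hDval : ∀ x y : A, D x y = d x * φ y := fun x y => rfl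
  have hder : ∀ x y z : A, D (x * y) z = D x (y * z) + D y (z * x) := by
    intro x y z
    simp only [hDval, ContinuousLinearMap.add_apply, hd, hφ_mul]
    ring
  refine ⟨⟨a, ha⟩, ?_, ?_⟩
  · intro h
    exact ha (h D hder a)
  · intro h
    obtain ⟨z, hz⟩ := h D hder
    have := hz a a
    rw [hDval] at this
    simp only [sub_self] at this
    exact ha this
end

section
/- Let A, B be Banach algebras and θ : A → B a continuous epimorphism (surjective algebra homomorphism). If A is point amenable (every continuous point derivation at every character of A is zero), then B is point amenable. -/
/-- Point amenability: every continuous point derivation at every character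
vanishes. -/
def PointAmenable (A : Type*) [NormedRing A] [NormedAlgebra ℂ A] : Prop :=
  ∀ φ : A →L[ℂ] ℂ, φ ≠ 0 → (∀ a b, φ (a * b) = φ a * φ b) →
    ∀ d : A →L[ℂ] ℂ, (∀ a b, d (a * b) = d a * φ b + φ a * d b) → d = 0

/-- point amenability passes to images under continuous
surjective algebra homomorphisms of Banach algebras. -/
theorem pointAmenable_of_epi {A B : Type*}
    [NormedRing A] [NormedAlgebra ℂ A] [CompleteSpace A]
    [NormedRing B] [NormedAlgebra ℂ B] [CompleteSpace B]
    (θ : A →L[ℂ] B) (hθ_mul : ∀ a b, θ (a * b) = θ a * θ b)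
    (hθ_surj : Function.Surjective θ)
    (hA : PointAmenable A) :
    PointAmenable B := by
  intro φ hφ hφmul d hd
  have hcomp : φ.comp θ ≠ 0 := by
    intro h
    apply hφ
    ext b
    obtain ⟨a, rfl⟩ := hθ_surj b
    have := congrFun (congrArg DFunLike.coe h) a
    simpa using this
  have h0 : d.comp θ = 0 := by
    apply hA (φ.comp θ) hcomp
    · intro a b; simp [hθ_mul, hφmul]
    · intro a b; simp [hθ_mul, hd]
  ext b
  obtain ⟨a, rfl⟩ := hθ_surj b
  have := congrFun (congrArg DFunLike.coe h0) a
  simpa using this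
end
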